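/- Let (x_1, x_2) be a bivariate Gaussian with mean μ ∈ ℝ² and covariance matrix Σ with Σ_{11} = Σ_{22} = 1 and correlation ρ = Σ_{12} ∈ (−1, 1). Then the orthant probability P(x_1 > 0, x_2 > 0) is a strictly increasing function of ρ. -/

import Mathlib

set_option maxHeartbeats 1000000

open Real MeasureTheory

/-- The orthant probability `P(x₁ > 0, x₂ > 0)` of a bivariate Gaussian with mean
`(μ₁, μ₂)`, unit variances and correlation `ρ`, written as an explicit integral of the
bivariate Gaussian density. -/
noncomputable def orthantProb (μ₁ μ₂ ρ : ℝ) : ℝ :=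
  ∫ p in Set.Ioi (0 : ℝ) ×ˢ Set.Ioi (0 : ℝ),
    (2 * π * Real.sqrt (1 - ρ ^ 2))⁻¹ *
      Real.exp (-(((p.1 - μ₁) ^ 2 - 2 * ρ * (p.1 - μ₁) * (p.2 - μ₂) + (p.2 - μ₂) ^ 2)
        / (2 * (1 - ρ ^ 2))))

noncomputable def bvnd (μ₁ μ₂ ρ x y : ℝ) : ℝ :=
  (2 * π * Real.sqrt (1 - ρ ^ 2))⁻¹ *
    Real.exp (-(((x - μ₁) ^ 2 - 2 * ρ * (x - μ₁) * (y - μ₂) + (y - μ₂) ^ 2)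
      / (2 * (1 - ρ ^ 2))))

noncomputable def bvndx (μ₁ μ₂ ρ x y : ℝ) : ℝ :=
  -(bvnd μ₁ μ₂ ρ x y * (((x - μ₁) - ρ * (y - μ₂)) / (1 - ρ ^ 2)))

noncomputable def bvndρ (μ₁ μ₂ ρ x y : ℝ) : ℝ :=
  bvnd μ₁ μ₂ ρ x y *
    ((ρ * (1 - ρ ^ 2) + (x - μ₁) * (y - μ₂) * (1 - ρ ^ 2)
      - ρ * ((x - μ₁) ^ 2 - 2 * ρ * (x - μ₁) * (y - μ₂) + (y - μ₂) ^ 2)) / (1 - ρ ^ 2) ^ 2)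

lemma bvnd_pos {ρ : ℝ} (hρ : ρ ∈ Set.Ioo (-1 : ℝ) 1) (μ₁ μ₂ x y : ℝ) :
    0 < bvnd μ₁ μ₂ ρ x y := by
  have hs : 0 < 1 - ρ ^ 2 := by nlinarith [hρ.1, hρ.2]
  have : 0 < 2 * π * Real.sqrt (1 - ρ ^ 2) :=
    mul_pos (by positivity) (Real.sqrt_pos.mpr hs)
  exact mul_pos (inv_pos.mpr this) (Real.exp_pos _)

lemma hasDerivAt_bvnd_x {ρ : ℝ} (hρ : ρ ∈ Set.Ioo (-1 : ℝ) 1) (μ₁ μ₂ y x : ℝ) :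
    HasDerivAt (fun x => bvnd μ₁ μ₂ ρ x y) (bvndx μ₁ μ₂ ρ x y) x := by
  have hs : 0 < 1 - ρ ^ 2 := by nlinarith [hρ.1, hρ.2]
  have h1 : HasDerivAt (fun x : ℝ => x - μ₁) 1 x := (hasDerivAt_id x).sub_const μ₁
  have h2 : HasDerivAt
      (fun x => (x - μ₁) ^ 2 - 2 * ρ * (x - μ₁) * (y - μ₂) + (y - μ₂) ^ 2)
      (2 * (x - μ₁) - 2 * ρ * (y - μ₂)) x := by
    have := (((h1.pow 2).sub ((h1.const_mul (2 * ρ)).mul_const (y - μ₂))).add_const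
      ((y - μ₂) ^ 2))
    refine this.congr_deriv ?_
    ring
  have h3 : HasDerivAt
      (fun x => -(((x - μ₁) ^ 2 - 2 * ρ * (x - μ₁) * (y - μ₂) + (y - μ₂) ^ 2)
        / (2 * (1 - ρ ^ 2))))
      (-((2 * (x - μ₁) - 2 * ρ * (y - μ₂)) / (2 * (1 - ρ ^ 2)))) x :=
    (h2.div_const _).neg
  have h4 := (h3.exp.const_mul ((2 * π * Real.sqrt (1 - ρ ^ 2))⁻¹))
  refine h4.congr_deriv ?_
  unfold bvndx bvnd
  field_simp

lemma hasDerivAt_bvndx_y {ρ : ℝ} (hρ : ρ ∈ Set.Ioo (-1 : ℝ) 1) (μ₁ μ₂ x y : ℝ) :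
    HasDerivAt (fun y => bvndx μ₁ μ₂ ρ x y) (bvndρ μ₁ μ₂ ρ x y) y := by
  have hs : 0 < 1 - ρ ^ 2 := by nlinarith [hρ.1, hρ.2]
  have h1 : HasDerivAt (fun y : ℝ => y - μ₂) 1 y := (hasDerivAt_id y).sub_const μ₂
  have h2 : HasDerivAt
      (fun y => (x - μ₁) ^ 2 - 2 * ρ * (x - μ₁) * (y - μ₂) + (y - μ₂) ^ 2)
      (-(2 * ρ * (x - μ₁)) + 2 * (y - μ₂)) y := by
    have := ((hasDerivAt_const y ((x - μ₁) ^ 2)).sub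
      (h1.const_mul (2 * ρ * (x - μ₁)))).add (h1.pow 2)
    refine this.congr_deriv ?_
    ring
  have hexp := ((h2.div_const (2 * (1 - ρ ^ 2))).neg).exp
  have hc := hexp.const_mul ((2 * π * Real.sqrt (1 - ρ ^ 2))⁻¹)
  have hlin : HasDerivAt (fun y => ((x - μ₁) - ρ * (y - μ₂)) / (1 - ρ ^ 2))
      ((0 - ρ * 1) / (1 - ρ ^ 2)) y :=
    ((hasDerivAt_const y (x - μ₁)).sub (h1.const_mul ρ)).div_const _
  have h4 := (hc.mul hlin).neg
  refine h4.congr_deriv ?_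
  unfold bvndρ bvnd
  simp only [Pi.neg_apply, Pi.div_apply, Pi.mul_apply, Pi.inv_apply]
  field_simp
  ring

lemma hasDerivAt_bvnd_ρ {ρ : ℝ} (hρ : ρ ∈ Set.Ioo (-1 : ℝ) 1) (μ₁ μ₂ x y : ℝ) :
    HasDerivAt (fun r => bvnd μ₁ μ₂ r x y) (bvndρ μ₁ μ₂ ρ x y) ρ := by
  have hs : 0 < 1 - ρ ^ 2 := by nlinarith [hρ.1, hρ.2]
  have ht0 : 0 < Real.sqrt (1 - ρ ^ 2) := Real.sqrt_pos.mpr hs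
  have hsq : HasDerivAt (fun r : ℝ => 1 - r ^ 2) (-(2 * ρ)) ρ := by
    have := (hasDerivAt_const ρ (1 : ℝ)).sub (hasDerivAt_pow 2 ρ)
    refine this.congr_deriv ?_
    ring
  have hsqrt : HasDerivAt (fun r : ℝ => Real.sqrt (1 - r ^ 2))
      (1 / (2 * Real.sqrt (1 - ρ ^ 2)) * (-(2 * ρ))) ρ :=
    (Real.hasDerivAt_sqrt hs.ne').comp ρ hsq
  have hc : HasDerivAt (fun r : ℝ => 2 * π * Real.sqrt (1 - r ^ 2))
      (2 * π * (1 / (2 * Real.sqrt (1 - ρ ^ 2)) * (-(2 * ρ)))) ρ := hsqrt.const_mul _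
  have hne : 2 * π * Real.sqrt (1 - ρ ^ 2) ≠ 0 := by positivity
  have hinv := hc.inv hne
  have hQ : HasDerivAt
      (fun r : ℝ => (x - μ₁) ^ 2 - 2 * r * (x - μ₁) * (y - μ₂) + (y - μ₂) ^ 2)
      (-(2 * (x - μ₁) * (y - μ₂))) ρ := by
    have := ((hasDerivAt_const ρ ((x - μ₁) ^ 2)).sub
      (((hasDerivAt_id ρ).const_mul 2).mul_const (x - μ₁) |>.mul_const (y - μ₂))).add
      (hasDerivAt_const ρ ((y - μ₂) ^ 2))
    refine this.congr_deriv ?_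
    ring
  have hden : HasDerivAt (fun r : ℝ => 2 * (1 - r ^ 2)) (2 * (-(2 * ρ))) ρ := hsq.const_mul 2
  have hdne : 2 * (1 - ρ ^ 2) ≠ 0 := by positivity
  have hdiv := (hQ.div hden hdne).neg.exp
  have h4 := hinv.mul hdiv
  refine h4.congr_deriv ?_
  unfold bvndρ bvnd
  simp only [Pi.neg_apply, Pi.div_apply, Pi.mul_apply, Pi.inv_apply]
  have ht : Real.sqrt (1 - ρ ^ 2) ^ 2 = 1 - ρ ^ 2 := Real.sq_sqrt hs.le
  set t := Real.sqrt (1 - ρ ^ 2) with htdef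
  field_simp
  rw [← ht]
  ring

lemma poly_exp_bound {b : ℝ} (hb : 0 < b) (T : ℝ) (hT : 0 ≤ T) :
    (1 + T) * Real.exp (-(b * T)) ≤ max 1 (2 / b) * Real.exp (-(b / 2 * T)) := by
  have h1 : b / 2 * T + 1 ≤ Real.exp (b / 2 * T) := Real.add_one_le_exp _
  have hM : 1 + T ≤ max 1 (2 / b) * (b / 2 * T + 1) := by
    rcases le_total (2 / b) 1 with h | h
    · rw [max_eq_left h]
      have : 1 ≤ b / 2 := by rw [div_le_one hb] at h; linarith
      nlinarith
    · rw [max_eq_right h]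
      have : 1 ≤ 2 / b := h
      have hb2 : 2 / b * (b / 2) = 1 := by field_simp
      nlinarith
  have hM0 : (0:ℝ) < max 1 (2 / b) := lt_of_lt_of_le one_pos (le_max_left _ _)
  calc (1 + T) * Real.exp (-(b * T))
      ≤ (max 1 (2 / b) * Real.exp (b / 2 * T)) * Real.exp (-(b * T)) := by
        apply mul_le_mul_of_nonneg_right _ (Real.exp_pos _).le
        exact hM.trans (by nlinarith [Real.exp_pos (b/2*T), h1, hM0.le])
    _ = max 1 (2 / b) * Real.exp (-(b / 2 * T)) := by
        rw [mul_assoc, ← Real.exp_add]; ring_nf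


lemma gauss_bound (μ₁ μ₂ a : ℝ) (ha0 : 0 ≤ a) (ha : a < 1) :
    ∃ C k : ℝ, 0 < k ∧ 0 < C ∧ ∀ ρ x y : ℝ, |ρ| ≤ a →
      |bvnd μ₁ μ₂ ρ x y| ≤
          C * (Real.exp (-(k * (x - μ₁) ^ 2)) * Real.exp (-(k * (y - μ₂) ^ 2))) ∧
      |bvndρ μ₁ μ₂ ρ x y| ≤
          C * (Real.exp (-(k * (x - μ₁) ^ 2)) * Real.exp (-(k * (y - μ₂) ^ 2))) ∧
      |bvndx μ₁ μ₂ ρ x y| ≤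
          C * (Real.exp (-(k * (x - μ₁) ^ 2)) * Real.exp (-(k * (y - μ₂) ^ 2))) := by
  have hsm : 0 < 1 - a ^ 2 := by nlinarith
  have hb : (0:ℝ) < (1 - a) / 2 := by linarith
  refine ⟨(2 * π * Real.sqrt (1 - a ^ 2))⁻¹ * max 1 (2 / ((1 - a) / 2)) *
      (1 + 4 / (1 - a ^ 2) ^ 2 + 2 / (1 - a ^ 2)), (1 - a) / 2 / 2,
    by positivity, ?_, ?_⟩
  · have h1 : (0:ℝ) < (2 * π * Real.sqrt (1 - a ^ 2))⁻¹ := by positivity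
    have h2 : (0:ℝ) < max 1 (2 / ((1 - a) / 2)) := lt_of_lt_of_le one_pos (le_max_left _ _)
    have h3 : (0:ℝ) < 1 + 4 / (1 - a ^ 2) ^ 2 + 2 / (1 - a ^ 2) := by positivity
    positivity
  intro ρ x y hρa
  -- atomize the constants
  obtain ⟨c1, hc1def⟩ : ∃ c : ℝ, c = (2 * π * Real.sqrt (1 - a ^ 2))⁻¹ := ⟨_, rfl⟩
  obtain ⟨M, hMdef⟩ : ∃ c : ℝ, c = max 1 (2 / ((1 - a) / 2)) := ⟨_, rfl⟩
  obtain ⟨cR, hcRdef⟩ : ∃ c : ℝ, c = 1 + 4 / (1 - a ^ 2) ^ 2 + 2 / (1 - a ^ 2) := ⟨_, rfl⟩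
  rw [← hc1def, ← hMdef, ← hcRdef]
  have hc1 : 0 < c1 := by rw [hc1def]; positivity
  have hM0 : 0 < M := by rw [hMdef]; exact lt_of_lt_of_le one_pos (le_max_left _ _)
  have hcR : 0 < cR := by rw [hcRdef]; positivity
  obtain ⟨hρ1, hρ2⟩ := abs_le.mp hρa
  have hρIoo : ρ ∈ Set.Ioo (-1 : ℝ) 1 := ⟨by linarith, by linarith⟩
  -- atomize the variables
  obtain ⟨u, hudef⟩ : ∃ u : ℝ, u = x - μ₁ := ⟨_, rfl⟩
  obtain ⟨v, hvdef⟩ : ∃ v : ℝ, v = y - μ₂ := ⟨_, rfl⟩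
  rw [← hudef, ← hvdef]
  obtain ⟨T, hTdef⟩ : ∃ T : ℝ, T = u ^ 2 + v ^ 2 := ⟨_, rfl⟩
  obtain ⟨s, hsdef⟩ : ∃ s : ℝ, s = 1 - ρ ^ 2 := ⟨_, rfl⟩
  obtain ⟨Q, hQdef⟩ : ∃ Q : ℝ, Q = u ^ 2 - 2 * ρ * u * v + v ^ 2 := ⟨_, rfl⟩
  have hT0 : 0 ≤ T := by rw [hTdef]; positivity
  have hρsq : ρ ^ 2 ≤ a ^ 2 := sq_le_sq' (by linarith) hρ2
  have hs_lb : 1 - a ^ 2 ≤ s := by rw [hsdef]; linarith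
  have hs_pos : 0 < s := lt_of_lt_of_le hsm hs_lb
  have hs_le1 : s ≤ 1 := by rw [hsdef]; linarith [sq_nonneg ρ]
  have hQ0 : 0 ≤ Q := by
    rw [hQdef]
    linarith [sq_nonneg (u - ρ * v), mul_nonneg (by linarith :
      (0:ℝ) ≤ 1 - ρ ^ 2) (sq_nonneg v)]
  have hQlb : (1 - a) * T ≤ Q := by
    rw [hQdef, hTdef]
    linarith [mul_nonneg (by linarith : (0:ℝ) ≤ a - ρ) (sq_nonneg (u + v)),
      mul_nonneg (by linarith : (0:ℝ) ≤ a + ρ) (sq_nonneg (u - v))]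
  have hQub : Q ≤ 2 * T := by
    rw [hQdef, hTdef]
    linarith [mul_nonneg (by linarith : (0:ℝ) ≤ 1 + ρ) (sq_nonneg (u + v)),
      mul_nonneg (by linarith : (0:ℝ) ≤ 1 - ρ) (sq_nonneg (u - v))]
  have hbvnd_eq : bvnd μ₁ μ₂ ρ x y =
      (2 * π * Real.sqrt s)⁻¹ * Real.exp (-(Q / (2 * s))) := by
    rw [hsdef, hQdef, hudef, hvdef]; rfl
  have hbvnd_pos : 0 < bvnd μ₁ μ₂ ρ x y := bvnd_pos hρIoo μ₁ μ₂ x y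
  have hcc : (2 * π * Real.sqrt s)⁻¹ ≤ c1 := by
    rw [hc1def]
    apply inv_anti₀ (by positivity)
    have h := Real.sqrt_le_sqrt hs_lb
    have := mul_le_mul_of_nonneg_left h (by positivity : (0:ℝ) ≤ 2 * π)
    linarith
  have hEE : Real.exp (-(Q / (2 * s))) ≤ Real.exp (-((1 - a) / 2 * T)) := by
    apply Real.exp_le_exp.mpr
    have h2 : Q / 2 ≤ Q / (2 * s) := by
      apply div_le_div_of_nonneg_left hQ0 (by positivity)
      linarith
    linarith
  have hbvnd_le : bvnd μ₁ μ₂ ρ x y ≤ c1 * Real.exp (-((1 - a) / 2 * T)) := by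
    rw [hbvnd_eq]
    exact mul_le_mul hcc hEE (Real.exp_pos _).le hc1.le
  have key : ∀ R c : ℝ, 0 ≤ c → c ≤ cR → |R| ≤ c * (1 + T) →
      |bvnd μ₁ μ₂ ρ x y * R| ≤
        c1 * M * cR * (Real.exp (-((1 - a) / 2 / 2 * u ^ 2)) *
          Real.exp (-((1 - a) / 2 / 2 * v ^ 2))) := by
    intro R c hc hccR hR
    have hexpprod : Real.exp (-((1 - a) / 2 / 2 * u ^ 2)) *
        Real.exp (-((1 - a) / 2 / 2 * v ^ 2)) = Real.exp (-((1 - a) / 2 / 2 * T)) := by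
      rw [← Real.exp_add, hTdef]; ring_nf
    rw [hexpprod, abs_mul, abs_of_pos hbvnd_pos]
    have step1 : bvnd μ₁ μ₂ ρ x y * |R| ≤
        (c1 * Real.exp (-((1 - a) / 2 * T))) * (c * (1 + T)) :=
      mul_le_mul hbvnd_le hR (abs_nonneg _) (mul_nonneg hc1.le (Real.exp_pos _).le)
    have step2 : (c1 * c) * ((1 + T) * Real.exp (-((1 - a) / 2 * T))) ≤
        (c1 * c) * (M * Real.exp (-((1 - a) / 2 / 2 * T))) := by
      apply mul_le_mul_of_nonneg_left _ (mul_nonneg hc1.le hc)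
      have := poly_exp_bound hb T hT0
      rw [hMdef]
      exact this
    have step3 : (c1 * c) * (M * Real.exp (-((1 - a) / 2 / 2 * T))) ≤
        c1 * M * cR * Real.exp (-((1 - a) / 2 / 2 * T)) := by
      have h4 : c1 * c * M ≤ c1 * cR * M :=
        mul_le_mul_of_nonneg_right (mul_le_mul_of_nonneg_left hccR hc1.le) hM0.le
      calc (c1 * c) * (M * Real.exp (-((1 - a) / 2 / 2 * T)))
          = (c1 * c * M) * Real.exp (-((1 - a) / 2 / 2 * T)) := by ring
        _ ≤ (c1 * cR * M) * Real.exp (-((1 - a) / 2 / 2 * T)) :=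
            mul_le_mul_of_nonneg_right h4 (Real.exp_pos _).le
        _ = c1 * M * cR * Real.exp (-((1 - a) / 2 / 2 * T)) := by ring
    calc bvnd μ₁ μ₂ ρ x y * |R|
        ≤ (c1 * Real.exp (-((1 - a) / 2 * T))) * (c * (1 + T)) := step1
      _ = (c1 * c) * ((1 + T) * Real.exp (-((1 - a) / 2 * T))) := by ring
      _ ≤ (c1 * c) * (M * Real.exp (-((1 - a) / 2 / 2 * T))) := step2
      _ ≤ c1 * M * cR * Real.exp (-((1 - a) / 2 / 2 * T)) := step3
  refine ⟨?_, ?_, ?_⟩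
  · have h := key 1 1 one_pos.le (by
        rw [hcRdef]
        have h4 : (0:ℝ) ≤ 4 / (1 - a ^ 2) ^ 2 := by positivity
        have h5 : (0:ℝ) ≤ 2 / (1 - a ^ 2) := by positivity
        linarith) (by rw [abs_one]; linarith)
    simpa using h
  · have heq : bvndρ μ₁ μ₂ ρ x y =
        bvnd μ₁ μ₂ ρ x y * ((ρ * s + u * v * s - ρ * Q) / s ^ 2) := by
      rw [hsdef, hQdef, hudef, hvdef]; rfl
    rw [heq]
    apply key _ (4 / (1 - a ^ 2) ^ 2) (by positivity) (by
      rw [hcRdef]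
      have h5 : (0:ℝ) ≤ 2 / (1 - a ^ 2) := by positivity
      linarith)
    have habs : |ρ * s + u * v * s - ρ * Q| ≤ 4 * (1 + T) := by
      have h1 : |ρ * s| ≤ 1 := by
        rw [abs_mul, abs_of_pos hs_pos]
        have := mul_le_mul (show |ρ| ≤ 1 by linarith) hs_le1 hs_pos.le one_pos.le
        linarith
      have h2 : |u * v * s| ≤ T / 2 := by
        rw [abs_mul, abs_of_pos hs_pos]
        have h5 : |u * v| ≤ T / 2 := by
          rw [abs_mul, hTdef]
          linarith [sq_nonneg (|u| - |v|), sq_abs u, sq_abs v]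
        have := mul_le_of_le_one_right (abs_nonneg (u * v)) hs_le1
        linarith
      have h3 : |ρ * Q| ≤ 2 * T := by
        rw [abs_mul, abs_of_nonneg hQ0]
        have := mul_le_mul (show |ρ| ≤ 1 by linarith) hQub hQ0 one_pos.le
        linarith
      calc |ρ * s + u * v * s - ρ * Q| ≤ |ρ * s + u * v * s| + |ρ * Q| := abs_sub _ _
        _ ≤ |ρ * s| + |u * v * s| + |ρ * Q| := by linarith [abs_add_le (ρ * s) (u * v * s)]
        _ ≤ 4 * (1 + T) := by linarith
    rw [abs_div, abs_of_pos (by positivity : (0:ℝ) < s ^ 2),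
      div_le_iff₀ (by positivity : (0:ℝ) < s ^ 2)]
    have hss : (1 - a ^ 2) ^ 2 ≤ s ^ 2 := pow_le_pow_left₀ hsm.le hs_lb 2
    calc |ρ * s + u * v * s - ρ * Q| ≤ 4 * (1 + T) := habs
      _ = (4 / (1 - a ^ 2) ^ 2 * (1 + T)) * (1 - a ^ 2) ^ 2 := by field_simp
      _ ≤ (4 / (1 - a ^ 2) ^ 2 * (1 + T)) * s ^ 2 :=
          mul_le_mul_of_nonneg_left hss (mul_nonneg (by positivity) (by linarith))
  · have heq : bvndx μ₁ μ₂ ρ x y = -(bvnd μ₁ μ₂ ρ x y * ((u - ρ * v) / s)) := by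
      rw [hsdef, hudef, hvdef]; rfl
    rw [heq, abs_neg]
    apply key _ (2 / (1 - a ^ 2)) (by positivity) (by
      rw [hcRdef]
      have h4 : (0:ℝ) ≤ 4 / (1 - a ^ 2) ^ 2 := by positivity
      linarith)
    have habs : |u - ρ * v| ≤ 2 * (1 + T) := by
      have h1 : |u| ≤ (1 + u ^ 2) / 2 := by
        linarith [sq_nonneg (|u| - 1), sq_abs u]
      have h2 : |v| ≤ (1 + v ^ 2) / 2 := by
        linarith [sq_nonneg (|v| - 1), sq_abs v]
      have h3 : |ρ * v| ≤ |v| := by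
        rw [abs_mul]
        have := mul_le_mul_of_nonneg_right (show |ρ| ≤ 1 by linarith) (abs_nonneg v)
        linarith
      calc |u - ρ * v| ≤ |u| + |ρ * v| := abs_sub _ _
        _ ≤ 2 * (1 + T) := by rw [hTdef] at hT0 ⊢; linarith
    rw [abs_div, abs_of_pos hs_pos, div_le_iff₀ hs_pos]
    calc |u - ρ * v| ≤ 2 * (1 + T) := habs
      _ = (2 / (1 - a ^ 2) * (1 + T)) * (1 - a ^ 2) := by field_simp
      _ ≤ (2 / (1 - a ^ 2) * (1 + T)) * s :=
          mul_le_mul_of_nonneg_left hs_lb (mul_nonneg (by positivity) (by linarith))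

lemma continuous_bvnd_pair (μ₁ μ₂ ρ : ℝ) :
    Continuous (fun p : ℝ × ℝ => bvnd μ₁ μ₂ ρ p.1 p.2) := by
  unfold bvnd; fun_prop

lemma continuous_bvndρ_pair (μ₁ μ₂ ρ : ℝ) :
    Continuous (fun p : ℝ × ℝ => bvndρ μ₁ μ₂ ρ p.1 p.2) := by
  unfold bvndρ bvnd; fun_prop

lemma integrable_gauss1d (c k m : ℝ) (hk : 0 < k) :
    Integrable (fun x : ℝ => c * Real.exp (-(k * (x - m) ^ 2))) := by
  have h := ((integrable_exp_neg_mul_sq hk).comp_sub_right m).const_mul c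
  simpa [neg_mul] using h

lemma integrable_gauss2d (C k μ₁ μ₂ : ℝ) (hk : 0 < k) :
    Integrable (fun p : ℝ × ℝ =>
      C * (Real.exp (-(k * (p.1 - μ₁) ^ 2)) * Real.exp (-(k * (p.2 - μ₂) ^ 2)))) := by
  rw [Measure.volume_eq_prod]
  have h := (integrable_gauss1d C k μ₁ hk).mul_prod (integrable_gauss1d 1 k μ₂ hk)
  simpa [mul_assoc, one_mul] using h

lemma integrableOn_of_gauss_bound {g : ℝ × ℝ → ℝ} {C k μ₁ μ₂ : ℝ} (hk : 0 < k)
    (hg : Continuous g) (s : Set (ℝ × ℝ))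
    (hb : ∀ p : ℝ × ℝ, |g p| ≤
      C * (Real.exp (-(k * (p.1 - μ₁) ^ 2)) * Real.exp (-(k * (p.2 - μ₂) ^ 2)))) :
    IntegrableOn g s := by
  apply ((integrable_gauss2d C k μ₁ μ₂ hk).restrict (s := s)).mono'
    (hg.aestronglyMeasurable.restrict)
  exact Filter.Eventually.of_forall fun p => by simpa [Real.norm_eq_abs] using hb p

lemma integrableOn_of_gauss_bound1d {g : ℝ → ℝ} {C k m : ℝ} (hk : 0 < k)
    (hg : Continuous g) (s : Set ℝ)
    (hb : ∀ y : ℝ, |g y| ≤ C * Real.exp (-(k * (y - m) ^ 2))) :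
    IntegrableOn g s := by
  apply ((integrable_gauss1d C k m hk).restrict (s := s)).mono'
    (hg.aestronglyMeasurable.restrict)
  exact Filter.Eventually.of_forall fun p => by simpa [Real.norm_eq_abs] using hb p

lemma tendsto_of_gauss_bound {g : ℝ → ℝ} {C k m : ℝ} (hk : 0 < k)
    (hb : ∀ y, |g y| ≤ C * Real.exp (-(k * (y - m) ^ 2))) :
    Filter.Tendsto g Filter.atTop (nhds 0) := by
  apply squeeze_zero_norm (fun y => by simpa [Real.norm_eq_abs] using hb y)
  have h1 : Filter.Tendsto (fun y : ℝ => y - m) Filter.atTop Filter.atTop :=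
    Filter.tendsto_atTop_add_const_right _ (-m) Filter.tendsto_id
  have h2 : Filter.Tendsto (fun y : ℝ => (y - m) ^ 2) Filter.atTop Filter.atTop :=
    (Filter.tendsto_pow_atTop two_ne_zero).comp h1
  have h3 : Filter.Tendsto (fun y : ℝ => k * (y - m) ^ 2) Filter.atTop Filter.atTop :=
    h2.const_mul_atTop hk
  have h4 : Filter.Tendsto (fun y : ℝ => -(k * (y - m) ^ 2)) Filter.atTop Filter.atBot :=
    Filter.tendsto_neg_atBot_iff.mpr h3
  have h5 := (Real.tendsto_exp_atBot.comp h4).const_mul C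
  simpa using h5

lemma inner_integral (μ₁ μ₂ : ℝ) {ρ : ℝ} (hρ : ρ ∈ Set.Ioo (-1 : ℝ) 1) (x : ℝ) :
    ∫ y in Set.Ioi (0 : ℝ), bvndρ μ₁ μ₂ ρ x y = -(bvndx μ₁ μ₂ ρ x 0) := by
  have ha : |ρ| < 1 := abs_lt.mpr ⟨hρ.1, hρ.2⟩
  obtain ⟨C, k, hk, hC, hbnd⟩ := gauss_bound μ₁ μ₂ |ρ| (abs_nonneg ρ) ha
  have h := integral_Ioi_of_hasDerivAt_of_tendsto' (a := (0:ℝ)) (m := (0:ℝ))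
    (f := fun y => bvndx μ₁ μ₂ ρ x y) (f' := fun y => bvndρ μ₁ μ₂ ρ x y)
    (fun y _ => hasDerivAt_bvndx_y hρ μ₁ μ₂ x y)
    (integrableOn_of_gauss_bound1d (C := C * Real.exp (-(k * (x - μ₁) ^ 2))) (m := μ₂) hk
      (by unfold bvndρ bvnd; fun_prop) _
      (fun y => by
        have := (hbnd ρ x y le_rfl).2.1
        calc |bvndρ μ₁ μ₂ ρ x y| ≤
            C * (Real.exp (-(k * (x - μ₁) ^ 2)) * Real.exp (-(k * (y - μ₂) ^ 2))) := this
          _ = C * Real.exp (-(k * (x - μ₁) ^ 2)) * Real.exp (-(k * (y - μ₂) ^ 2)) := by ring))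
    (tendsto_of_gauss_bound (C := C * Real.exp (-(k * (x - μ₁) ^ 2))) (m := μ₂) hk
      (fun y => by
        have := (hbnd ρ x y le_rfl).2.2
        calc |bvndx μ₁ μ₂ ρ x y| ≤
            C * (Real.exp (-(k * (x - μ₁) ^ 2)) * Real.exp (-(k * (y - μ₂) ^ 2))) := this
          _ = C * Real.exp (-(k * (x - μ₁) ^ 2)) * Real.exp (-(k * (y - μ₂) ^ 2)) := by ring))
  rw [h]; ring

lemma outer_integral (μ₁ μ₂ : ℝ) {ρ : ℝ} (hρ : ρ ∈ Set.Ioo (-1 : ℝ) 1) :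
    ∫ x in Set.Ioi (0 : ℝ), -(bvndx μ₁ μ₂ ρ x 0) = bvnd μ₁ μ₂ ρ 0 0 := by
  have ha : |ρ| < 1 := abs_lt.mpr ⟨hρ.1, hρ.2⟩
  obtain ⟨C, k, hk, hC, hbnd⟩ := gauss_bound μ₁ μ₂ |ρ| (abs_nonneg ρ) ha
  have h := integral_Ioi_of_hasDerivAt_of_tendsto' (a := (0:ℝ)) (m := (0:ℝ))
    (f := fun x => -(bvnd μ₁ μ₂ ρ x 0)) (f' := fun x => -(bvndx μ₁ μ₂ ρ x 0))
    (fun x _ => (hasDerivAt_bvnd_x hρ μ₁ μ₂ 0 x).neg)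
    (integrableOn_of_gauss_bound1d (C := C * Real.exp (-(k * (0 - μ₂) ^ 2))) (m := μ₁) hk
      (by unfold bvndx bvnd; fun_prop) _
      (fun x => by
        have := (hbnd ρ x 0 le_rfl).2.2
        rw [abs_neg]
        calc |bvndx μ₁ μ₂ ρ x 0| ≤
            C * (Real.exp (-(k * (x - μ₁) ^ 2)) * Real.exp (-(k * (0 - μ₂) ^ 2))) := this
          _ = C * Real.exp (-(k * (0 - μ₂) ^ 2)) * Real.exp (-(k * (x - μ₁) ^ 2)) := by ring))
    (tendsto_of_gauss_bound (C := C * Real.exp (-(k * (0 - μ₂) ^ 2))) (m := μ₁) hk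
      (fun x => by
        have := (hbnd ρ x 0 le_rfl).1
        rw [abs_neg]
        calc |bvnd μ₁ μ₂ ρ x 0| ≤
            C * (Real.exp (-(k * (x - μ₁) ^ 2)) * Real.exp (-(k * (0 - μ₂) ^ 2))) := this
          _ = C * Real.exp (-(k * (0 - μ₂) ^ 2)) * Real.exp (-(k * (x - μ₁) ^ 2)) := by ring))
  rw [h]; ring

lemma integral_bvndρ (μ₁ μ₂ : ℝ) {ρ : ℝ} (hρ : ρ ∈ Set.Ioo (-1 : ℝ) 1) :
    ∫ p in Set.Ioi (0 : ℝ) ×ˢ Set.Ioi (0 : ℝ), bvndρ μ₁ μ₂ ρ p.1 p.2 =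
      bvnd μ₁ μ₂ ρ 0 0 := by
  have ha : |ρ| < 1 := abs_lt.mpr ⟨hρ.1, hρ.2⟩
  obtain ⟨C, k, hk, hC, hbnd⟩ := gauss_bound μ₁ μ₂ |ρ| (abs_nonneg ρ) ha
  have hint : IntegrableOn (fun p : ℝ × ℝ => bvndρ μ₁ μ₂ ρ p.1 p.2)
      (Set.Ioi (0 : ℝ) ×ˢ Set.Ioi (0 : ℝ)) :=
    integrableOn_of_gauss_bound hk (continuous_bvndρ_pair μ₁ μ₂ ρ) _
      (fun p => (hbnd ρ p.1 p.2 le_rfl).2.1)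
  rw [Measure.volume_eq_prod] at hint ⊢
  rw [setIntegral_prod _ hint]
  have : ∀ x : ℝ, ∫ y in Set.Ioi (0 : ℝ), bvndρ μ₁ μ₂ ρ x y = -(bvndx μ₁ μ₂ ρ x 0) :=
    inner_integral μ₁ μ₂ hρ
  simp_rw [this]
  exact outer_integral μ₁ μ₂ hρ

lemma hasDerivAt_orthantProb (μ₁ μ₂ : ℝ) {r : ℝ} (hr : r ∈ Set.Ioo (-1 : ℝ) 1) :
    HasDerivAt (orthantProb μ₁ μ₂) (bvnd μ₁ μ₂ r 0 0) r := by
  have hra : |r| < 1 := abs_lt.mpr ⟨hr.1, hr.2⟩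
  have ha0 : 0 ≤ (1 + |r|) / 2 := by positivity
  have ha : (1 + |r|) / 2 < 1 := by linarith
  obtain ⟨C, k, hk, hC, hbnd⟩ := gauss_bound μ₁ μ₂ ((1 + |r|) / 2) ha0 ha
  have hε : (0:ℝ) < (1 - |r|) / 2 := by linarith [abs_nonneg r]
  have hmem : ∀ ρ' ∈ Metric.ball r ((1 - |r|) / 2), |ρ'| ≤ (1 + |r|) / 2 := by
    intro ρ' h
    rw [Metric.mem_ball, Real.dist_eq] at h
    have := abs_sub_abs_le_abs_sub ρ' r
    linarith
  have hIoo : ∀ ρ' ∈ Metric.ball r ((1 - |r|) / 2), ρ' ∈ Set.Ioo (-1 : ℝ) 1 := by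
    intro ρ' h
    have h1 := hmem ρ' h
    have := abs_le.mp h1
    constructor <;> [linarith [this.1]; linarith [this.2]]
  have key := hasDerivAt_integral_of_dominated_loc_of_deriv_le
    (F := fun ρ (p : ℝ × ℝ) => bvnd μ₁ μ₂ ρ p.1 p.2)
    (F' := fun ρ (p : ℝ × ℝ) => bvndρ μ₁ μ₂ ρ p.1 p.2)
    (x₀ := r)
    (μ := volume.restrict (Set.Ioi (0:ℝ) ×ˢ Set.Ioi (0:ℝ)))
    (bound := fun p : ℝ × ℝ =>
      C * (Real.exp (-(k * (p.1 - μ₁) ^ 2)) * Real.exp (-(k * (p.2 - μ₂) ^ 2))))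
    (Metric.ball_mem_nhds r hε)
    (Filter.Eventually.of_forall fun ρ' =>
      (continuous_bvnd_pair μ₁ μ₂ ρ').aestronglyMeasurable.restrict)
    (integrableOn_of_gauss_bound hk (continuous_bvnd_pair μ₁ μ₂ r) _
      (fun p => (hbnd r p.1 p.2 (by linarith [abs_nonneg r])).1))
    ((continuous_bvndρ_pair μ₁ μ₂ r).aestronglyMeasurable.restrict)
    (Filter.Eventually.of_forall fun p ρ' hball => by
      simpa [Real.norm_eq_abs] using (hbnd ρ' p.1 p.2 (hmem ρ' hball)).2.1)
    ((integrable_gauss2d C k μ₁ μ₂ hk).restrict)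
    (Filter.Eventually.of_forall fun p ρ' hball =>
      hasDerivAt_bvnd_ρ (hIoo ρ' hball) μ₁ μ₂ p.1 p.2)
  have h2 := key.2
  rw [integral_bvndρ μ₁ μ₂ hr] at h2
  exact h2

/-- The bivariate Gaussian orthant probability is strictly increasing in the
correlation `ρ ∈ (-1, 1)`, for any fixed mean. -/
theorem stmt_13 (μ₁ μ₂ : ℝ) :
    StrictMonoOn (orthantProb μ₁ μ₂) (Set.Ioo (-1 : ℝ) 1) := by
  apply strictMonoOn_of_deriv_pos (convex_Ioo _ _)
  · exact fun r hr => (hasDerivAt_orthantProb μ₁ μ₂ hr).continuousAt.continuousWithinAt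
  · rw [interior_Ioo]
    intro r hr
    rw [(hasDerivAt_orthantProb μ₁ μ₂ hr).deriv]
    exact bvnd_pos hr μ₁ μ₂ 0 0
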